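/- Let m ≥ 1, let w_1,…,w_m be positive weights, and let w_{m+1} be a weight with 0 ≤ w_{m+1} ≤ min_{1≤i≤m} w_i. Then E_T((w_1,…,w_m)) ≥ (m/(m+1)) · E_T((w_1,…,w_m, w_{m+1})); that is, removing a product whose weight is at most every other weight loses at most a factor m/(m+1) of the expected maximum load. -/

import Mathlib

open Finset

/-- MNL choice probability for a single customer offered products with weights `w`:
outcome `some i` (select product `i`) has probability `w i / (1 + ∑ j, w j)`, and
outcome `none` (no purchase) has probability `1 / (1 + ∑ j, w j)`. -/
noncomputable def mnlProb {k : ℕ} (w : Fin k → ℝ) : Option (Fin k) → ℝ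
  | none => 1 / (1 + ∑ j, w j)
  | some i => w i / (1 + ∑ j, w j)

/-- The load of product `i`: the number of customers `t` selecting product `i`,
given the outcome `f` of the `T` customers' choices. -/
def loadCount {k T : ℕ} (f : Fin T → Option (Fin k)) (i : Fin k) : ℕ :=
  (Finset.univ.filter fun t => f t = some i).card

/-- `ET T k w` is the expected maximum load when products with weights `w 0, …, w (k-1)`
are statically offered to `T` customers making independent MNL choices; the loads form
a multinomial random vector. -/
noncomputable def ET (T k : ℕ) (w : Fin k → ℝ) : ℝ :=
  ∑ f : Fin T → Option (Fin k),
    (∏ t, mnlProb w (f t)) * ((Finset.univ.sup (loadCount f) : ℕ) : ℝ)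



lemma pow_mul_pow_le' {a b : ℝ} (hb : 0 ≤ b) (hba : b ≤ a) {k l : ℕ} (hkl : k ≤ l) :
    a ^ k * b ^ l ≤ b ^ k * a ^ l := by
  have ha : 0 ≤ a := hb.trans hba
  calc a ^ k * b ^ l = a ^ k * b ^ k * b ^ (l - k) := by
        rw [mul_assoc, ← pow_add]; congr 2; omega
    _ ≤ a ^ k * b ^ k * a ^ (l - k) := by
        apply mul_le_mul_of_nonneg_left (pow_le_pow_left₀ hb hba _) (by positivity)
    _ = b ^ k * a ^ l := by
        rw [mul_comm (a ^ k), mul_assoc, ← pow_add]; congr 2; omega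

lemma prod_comp_count {T : ℕ} {α : Type*} [Fintype α] [DecidableEq α]
    (g : α → ℝ) (f : Fin T → α) :
    ∏ t, g (f t) = ∏ a, g a ^ (univ.filter fun t => f t = a).card := by
  rw [← Finset.prod_fiberwise_of_maps_to (g := f) (fun x _ => mem_univ (f x))
      (fun t => g (f t))]
  refine Finset.prod_congr rfl fun a _ => ?_
  rw [← Finset.prod_const]
  exact Finset.prod_congr rfl fun t ht => by rw [(mem_filter.mp ht).2]

lemma stepA (T m : ℕ) (w' : Fin (m+1) → ℝ) (hw0 : ∀ j, 0 ≤ w' j)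
    (hle : ∀ j, w' (Fin.last m) ≤ w' j) :
    ((m:ℝ)/((m:ℝ)+1)) * ET T (m+1) w' ≤
      ∑ f : Fin T → Option (Fin (m+1)),
        (∏ t, mnlProb w' (f t)) *
          ((Finset.univ.sup (fun i : Fin m => loadCount f i.castSucc) : ℕ) : ℝ) := by
  classical
  have hDen : (0:ℝ) < 1 + ∑ j, w' j := by
    have : (0:ℝ) ≤ ∑ j, w' j := Finset.sum_nonneg fun j _ => hw0 j
    linarith
  have hp0 : ∀ a, 0 ≤ mnlProb w' a := by
    intro a
    cases a with
    | none => simp only [mnlProb]; positivity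
    | some j => simp only [mnlProb]; have := hw0 j; positivity
  set P : (Fin T → Option (Fin (m+1))) → ℝ := fun f => ∏ t, mnlProb w' (f t) with hPdef
  have hPnn : ∀ f, 0 ≤ P f := fun f => Finset.prod_nonneg fun t _ => hp0 _
  set M : (Fin T → Option (Fin (m+1))) → ℕ := fun f => Finset.univ.sup (loadCount f)
    with hMdef
  set Mm : (Fin T → Option (Fin (m+1))) → ℕ :=
    fun f => Finset.univ.sup (fun i : Fin m => loadCount f i.castSucc) with hMmdef
  set B : Fin (m+1) → Finset (Fin T → Option (Fin (m+1))) := fun j =>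
    Finset.univ.filter (fun f => ∀ j', j' ≠ j → loadCount f j' < loadCount f j)
    with hBdef
  have hterm : ∀ f, 0 ≤ P f * ((M f : ℕ) : ℝ) :=
    fun f => mul_nonneg (hPnn f) (by positivity)
  -- h1 : decomposition
  have h1 : ∀ f, P f * ((M f : ℕ) : ℝ) ≤
      P f * ((Mm f : ℕ) : ℝ) + (if f ∈ B (Fin.last m) then P f * ((M f : ℕ) : ℝ) else 0) := by
    intro f
    by_cases hf : f ∈ B (Fin.last m)
    · rw [if_pos hf]
      have h2 : 0 ≤ P f * ((Mm f : ℕ) : ℝ) := mul_nonneg (hPnn f) (by positivity)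
      linarith
    · rw [if_neg hf, add_zero]
      have hex : ∃ j', j' ≠ Fin.last m ∧ loadCount f (Fin.last m) ≤ loadCount f j' := by
        simp only [hBdef, Finset.mem_filter, Finset.mem_univ, true_and, not_forall] at hf
        obtain ⟨j', hj1, hj2⟩ := hf
        exact ⟨j', hj1, Nat.le_of_not_lt hj2⟩
      obtain ⟨j', hj'ne, hj'le⟩ := hex
      obtain ⟨j0, hj0⟩ := Fin.exists_castSucc_eq.mpr hj'ne
      have hMf : M f = Mm f := by
        apply le_antisymm
        · apply Finset.sup_le
          intro j _
          by_cases hj : j = Fin.last m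
          · subst hj
            refine le_trans ?_ (Finset.le_sup (f := fun i : Fin m => loadCount f i.castSucc)
              (Finset.mem_univ j0))
            show loadCount f (Fin.last m) ≤ loadCount f j0.castSucc
            rw [hj0]; exact hj'le
          · obtain ⟨i, hi⟩ := Fin.exists_castSucc_eq.mpr hj
            subst hi
            exact Finset.le_sup (f := fun i : Fin m => loadCount f i.castSucc)
              (Finset.mem_univ i)
        · apply Finset.sup_le
          intro i _
          exact Finset.le_sup (f := loadCount f) (Finset.mem_univ i.castSucc)
      rw [hMf]
  -- swap machinery
  have hswap : ∀ i : Fin m,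
      ∑ f ∈ B (Fin.last m), P f * ((M f : ℕ) : ℝ)
        ≤ ∑ f ∈ B i.castSucc, P f * ((M f : ℕ) : ℝ) := by
    intro i
    set σ : Equiv.Perm (Fin (m+1)) := Equiv.swap i.castSucc (Fin.last m) with hσdef
    set Φ : (Fin T → Option (Fin (m+1))) → (Fin T → Option (Fin (m+1))) :=
      fun f t => Option.map σ (f t) with hΦdef
    have hσσ : ∀ j, σ (σ j) = j := fun j => Equiv.swap_apply_self _ _ j
    have hEE : ∀ a : Option (Fin (m+1)), Option.map σ (Option.map σ a) = a := by
      intro a; cases a <;> simp [hσσ]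
    have hmapeq : ∀ (x : Option (Fin (m+1))) (j : Fin (m+1)),
        Option.map σ x = some j ↔ x = some (σ j) := by
      intro x j
      cases x with
      | none => simp
      | some z =>
        simp only [Option.map_some, Option.some.injEq]
        constructor
        · intro h; rw [← h, hσσ]
        · intro h; rw [h, hσσ]
    have hload : ∀ f (j : Fin (m+1)), loadCount (Φ f) j = loadCount f (σ j) := by
      intro f j
      unfold loadCount
      congr 1
      apply Finset.filter_congr
      intro t _
      simp only [hΦdef]
      rw [hmapeq]
    have hMΦ : ∀ f, M (Φ f) = M f := by
      intro f
      apply le_antisymm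
      · apply Finset.sup_le
        intro j _
        rw [hload]
        exact Finset.le_sup (f := loadCount f) (Finset.mem_univ (σ j))
      · apply Finset.sup_le
        intro j _
        have : loadCount f j = loadCount (Φ f) (σ j) := by rw [hload, hσσ]
        rw [this]
        exact Finset.le_sup (f := loadCount (Φ f)) (Finset.mem_univ (σ j))
    have hinj : Function.Injective Φ := by
      intro f g hfg
      funext t
      have := congrFun hfg t
      simp only [hΦdef] at this
      have := congrArg (Option.map σ) this
      rwa [hEE, hEE] at this
    -- P f ≤ P (Φ f) on B last
    have hPle : ∀ f ∈ B (Fin.last m), P f ≤ P (Φ f) := by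
      intro f hf
      have hcond := (Finset.mem_filter.mp hf).2
      have hnum : loadCount f i.castSucc < loadCount f (Fin.last m) :=
        hcond i.castSucc (Fin.castSucc_lt_last i).ne
      set x : Option (Fin (m+1)) := some i.castSucc with hxdef
      set y : Option (Fin (m+1)) := some (Fin.last m) with hydef
      have hxy : x ≠ y := by
        simp only [hxdef, hydef, ne_eq, Option.some.injEq]
        exact (Fin.castSucc_lt_last i).ne
      set n : Option (Fin (m+1)) → ℕ :=
        fun a => (Finset.univ.filter fun t => f t = a).card with hndef
      have hPf : P f = ∏ a, mnlProb w' a ^ n a := prod_comp_count (mnlProb w') f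
      have hPΦ : P (Φ f) = ∏ a, mnlProb w' (Option.map σ a) ^ n a := by
        have e1 : P (Φ f) = ∏ a, mnlProb w' a ^ n (Option.map σ a) := by
          simp only [hPdef]
          rw [prod_comp_count (mnlProb w') (Φ f)]
          refine Finset.prod_congr rfl fun a _ => ?_
          congr 1
          apply Finset.card_nbij' (fun t => t) (fun t => t) <;>
            intro t ht <;> simp only [Finset.mem_filter, Finset.mem_univ, true_and,
              Finset.mem_coe, hΦdef] at ht ⊢
          · rw [← ht, hEE]
          · rw [ht, hEE]
        rw [e1]
        -- reindex by the involution a ↦ Option.map σ a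
        have hinv : Function.Involutive (fun a : Option (Fin (m+1)) => Option.map σ a) := hEE
        have := Equiv.prod_comp hinv.toPerm
          (fun a : Option (Fin (m+1)) => mnlProb w' (Option.map σ a) ^ n a)
        rw [← this]
        refine Finset.prod_congr rfl fun a _ => ?_
        simp only [Function.Involutive.coe_toPerm]
        rw [hEE]
      rw [hPf, hPΦ]
      rw [← Finset.prod_sdiff (Finset.subset_univ {x, y}),
          ← Finset.prod_sdiff (Finset.subset_univ {x, y})]
      have hrest : ∀ a ∈ Finset.univ \ ({x, y} : Finset (Option (Fin (m+1)))),
          mnlProb w' (Option.map σ a) = mnlProb w' a := by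
        intro a ha
        simp only [Finset.mem_sdiff, Finset.mem_insert, Finset.mem_singleton] at ha
        obtain ⟨-, ha⟩ := ha
        push_neg at ha
        cases a with
        | none => rfl
        | some z =>
          have h1 : z ≠ i.castSucc := fun h => ha.1 (by rw [hxdef, h])
          have h2 : z ≠ Fin.last m := fun h => ha.2 (by rw [hydef, h])
          simp only [Option.map_some]
          rw [hσdef, Equiv.swap_apply_of_ne_of_ne h1 h2]
      have hresteq : ∏ a ∈ Finset.univ \ ({x, y} : Finset (Option (Fin (m+1)))),
          mnlProb w' a ^ n a
          = ∏ a ∈ Finset.univ \ ({x, y} : Finset (Option (Fin (m+1)))),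
            mnlProb w' (Option.map σ a) ^ n a :=
        Finset.prod_congr rfl fun a ha => by rw [hrest a ha]
      rw [← hresteq]
      apply mul_le_mul_of_nonneg_left _
        (Finset.prod_nonneg fun a _ => pow_nonneg (hp0 a) _)
      rw [Finset.prod_pair hxy, Finset.prod_pair hxy]
      have hmx : Option.map σ x = y := by
        simp only [hxdef, hydef, Option.map_some, hσdef, Equiv.swap_apply_left]
      have hmy : Option.map σ y = x := by
        simp only [hxdef, hydef, Option.map_some, hσdef, Equiv.swap_apply_right]
      rw [hmx, hmy]
      have hqy : mnlProb w' y ≤ mnlProb w' x := by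
        simp only [hxdef, hydef, mnlProb]
        exact (div_le_div_iff_of_pos_right hDen).mpr (hle i.castSucc)
      exact pow_mul_pow_le' (hp0 y) hqy hnum.le
    -- maps B last into B i.castSucc
    have hmaps : ∀ f ∈ B (Fin.last m), Φ f ∈ B i.castSucc := by
      intro f hf
      have hcond := (Finset.mem_filter.mp hf).2
      rw [hBdef, Finset.mem_filter]
      refine ⟨Finset.mem_univ _, fun j' hne => ?_⟩
      rw [hload, hload, hσdef, Equiv.swap_apply_left]
      apply hcond
      intro heq
      apply hne
      have := congrArg σ heq
      rw [hσσ, hσdef, Equiv.swap_apply_right] at this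
      exact this
    calc ∑ f ∈ B (Fin.last m), P f * ((M f : ℕ) : ℝ)
        ≤ ∑ f ∈ B (Fin.last m), P (Φ f) * ((M (Φ f) : ℕ) : ℝ) := by
          refine Finset.sum_le_sum fun f hf => ?_
          rw [hMΦ]
          exact mul_le_mul_of_nonneg_right (hPle f hf) (by positivity)
      _ = ∑ g ∈ (B (Fin.last m)).image Φ, P g * ((M g : ℕ) : ℝ) := by
          rw [Finset.sum_image (fun a _ b _ h => hinj h)]
      _ ≤ ∑ g ∈ B i.castSucc, P g * ((M g : ℕ) : ℝ) := by
          apply Finset.sum_le_sum_of_subset_of_nonneg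
          · intro g hg
            obtain ⟨f, hf, rfl⟩ := Finset.mem_image.mp hg
            exact hmaps f hf
          · intro g _ _
            exact hterm g
  -- disjointness of the B j
  have h3 : ∑ j : Fin (m+1), ∑ f ∈ B j, P f * ((M f : ℕ) : ℝ)
      ≤ ∑ f : Fin T → Option (Fin (m+1)), P f * ((M f : ℕ) : ℝ) := by
    calc ∑ j : Fin (m+1), ∑ f ∈ B j, P f * ((M f : ℕ) : ℝ)
        = ∑ j : Fin (m+1), ∑ f : Fin T → Option (Fin (m+1)),
            if f ∈ B j then P f * ((M f : ℕ) : ℝ) else 0 := by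
          refine Finset.sum_congr rfl fun j _ => ?_
          rw [Finset.sum_ite_mem, Finset.univ_inter]
      _ = ∑ f : Fin T → Option (Fin (m+1)), ∑ j : Fin (m+1),
            if f ∈ B j then P f * ((M f : ℕ) : ℝ) else 0 := Finset.sum_comm
      _ ≤ ∑ f : Fin T → Option (Fin (m+1)), P f * ((M f : ℕ) : ℝ) := by
          refine Finset.sum_le_sum fun f _ => ?_
          by_cases hex : ∃ j, f ∈ B j
          · obtain ⟨j0, hj0⟩ := hex
            rw [Finset.sum_eq_single j0]
            · rw [if_pos hj0]
            · intro b _ hbne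
              rw [if_neg]
              intro hb
              have hc1 := (Finset.mem_filter.mp hj0).2 b hbne
              have hc2 := (Finset.mem_filter.mp hb).2 j0 (Ne.symm hbne)
              omega
            · intro h; exact absurd (Finset.mem_univ j0) h
          · rw [Finset.sum_eq_zero (fun j _ => if_neg (fun h => hex ⟨j, h⟩))]
            exact hterm f
  -- final algebra
  show ((m:ℝ)/((m:ℝ)+1)) * (∑ f : Fin T → Option (Fin (m+1)), P f * ((M f : ℕ) : ℝ))
      ≤ ∑ f : Fin T → Option (Fin (m+1)), P f * ((Mm f : ℕ) : ℝ)
  set SB := ∑ f ∈ B (Fin.last m), P f * ((M f : ℕ) : ℝ) with hSBdef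
  have hES : ∑ f : Fin T → Option (Fin (m+1)), P f * ((M f : ℕ) : ℝ)
      ≤ (∑ f : Fin T → Option (Fin (m+1)), P f * ((Mm f : ℕ) : ℝ)) + SB := by
    calc ∑ f : Fin T → Option (Fin (m+1)), P f * ((M f : ℕ) : ℝ)
        ≤ ∑ f : Fin T → Option (Fin (m+1)),
            (P f * ((Mm f : ℕ) : ℝ) +
              (if f ∈ B (Fin.last m) then P f * ((M f : ℕ) : ℝ) else 0)) :=
          Finset.sum_le_sum fun f _ => h1 f
      _ = (∑ f : Fin T → Option (Fin (m+1)), P f * ((Mm f : ℕ) : ℝ)) + SB := by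
          rw [Finset.sum_add_distrib]
          congr 1
          rw [Finset.sum_ite_mem, Finset.univ_inter]
  have hperj : ∀ j : Fin (m+1), SB ≤ ∑ f ∈ B j, P f * ((M f : ℕ) : ℝ) := by
    intro j
    refine Fin.lastCases ?_ ?_ j
    · exact le_of_eq hSBdef.symm
    · intro i; exact hswap i
  have hBS : ((m:ℝ)+1) * SB ≤ ∑ f : Fin T → Option (Fin (m+1)), P f * ((M f : ℕ) : ℝ) := by
    calc ((m:ℝ)+1) * SB = ∑ _j : Fin (m+1), SB := by
          rw [Finset.sum_const, Finset.card_univ, Fintype.card_fin, nsmul_eq_mul]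
          push_cast; ring
      _ ≤ ∑ j : Fin (m+1), ∑ f ∈ B j, P f * ((M f : ℕ) : ℝ) :=
          Finset.sum_le_sum fun j _ => hperj j
      _ ≤ _ := h3
  have hm1 : (0:ℝ) < (m:ℝ) + 1 := by positivity
  rw [div_mul_eq_mul_div, div_le_iff₀ hm1]
  nlinarith [mul_le_mul_of_nonneg_left hES hm1.le, hBS]


lemma stepB (T m : ℕ) (w : Fin m → ℝ) (hw : ∀ i, 0 < w i)
    (wlast : ℝ) (h0 : 0 ≤ wlast) :
    ∑ f : Fin T → Option (Fin (m+1)),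
        (∏ t, mnlProb (Fin.snoc w wlast) (f t)) *
          ((Finset.univ.sup (fun i : Fin m => loadCount f i.castSucc) : ℕ) : ℝ)
      ≤ ET T m w := by
  set w' : Fin (m+1) → ℝ := Fin.snoc w wlast with hw'def
  have hS : (0:ℝ) ≤ ∑ i, w i := Finset.sum_nonneg fun i _ => (hw i).le
  set S : ℝ := ∑ i, w i with hSdef
  have hD : (0:ℝ) < 1 + S := by linarith
  have hD' : (0:ℝ) < 1 + S + wlast := by linarith
  have hW : (0:ℝ) < 1 + wlast := by linarith
  have hsum' : ∑ j, w' j = S + wlast := by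
    rw [hw'def, Fin.sum_univ_castSucc]
    simp [hSdef]
  have hp'none : mnlProb w' none = 1 / (1 + S + wlast) := by
    simp [mnlProb, hsum']; ring_nf
  have hp'some : ∀ j, mnlProb w' (some j) = w' j / (1 + S + wlast) := by
    intro j; simp [mnlProb, hsum']; ring_nf
  have hpnone : mnlProb w none = 1 / (1 + S) := by simp [mnlProb, hSdef]
  have hpsome : ∀ i, mnlProb w (some i) = w i / (1 + S) := by
    intro i; simp [mnlProb, hSdef]
  have hp'0 : ∀ a, 0 ≤ mnlProb w' a := by
    intro a
    cases a with
    | none => rw [hp'none]; positivity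
    | some j =>
      rw [hp'some]
      have : 0 ≤ w' j := by
        rw [hw'def]
        refine Fin.lastCases ?_ ?_ j
        · simpa using h0
        · intro i; simpa using (hw i).le
      positivity
  -- the kernel
  set r : Option (Fin m) → ℝ := fun a =>
    a.elim (1/(1+S) * ((1+S+wlast)/(1+wlast)))
      (fun i => w i * (1/(1+S) - 1/(1+S+wlast)) * ((1+S+wlast)/(1+wlast))) with hrdef
  set K : Option (Fin (m+1)) → Option (Fin m) → ℝ := fun a' a =>
    if a' = none ∨ a' = some (Fin.last m) then r a
    else if a' = Option.map Fin.castSucc a then 1 else 0 with hKdef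
  have hr0 : ∀ a, 0 ≤ r a := by
    intro a
    have hdd : 1/(1+S+wlast) ≤ 1/(1+S) := by
      apply one_div_le_one_div_of_le hD; linarith
    cases a with
    | none => simp only [hrdef, Option.elim]; positivity
    | some i =>
      simp only [hrdef, Option.elim]
      have := (hw i).le
      have h1 : (0:ℝ) ≤ 1/(1+S) - 1/(1+S+wlast) := by linarith
      positivity
  have hK0 : ∀ a' a, 0 ≤ K a' a := by
    intro a' a
    simp only [hKdef]
    split
    · exact hr0 a
    · split <;> norm_num
  have hrsum : ∑ a, r a = 1 := by
    rw [Fintype.sum_option]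
    simp only [hrdef, Option.elim]
    rw [← Finset.sum_mul, ← Finset.sum_mul]
    field_simp
    ring
  have hKrow : ∀ a', ∑ a, K a' a = 1 := by
    intro a'
    rcases a' with _ | j
    · simpa [hKdef] using hrsum
    · by_cases hj : j = Fin.last m
      · subst hj; simpa [hKdef] using hrsum
      · obtain ⟨i0, hi0⟩ := Fin.exists_castSucc_eq.mpr hj
        have : ∀ a : Option (Fin m),
            K (some j) a = if a = some i0 then 1 else 0 := by
          intro a
          simp only [hKdef, hj]
          rw [if_neg (by simp [hj])]
          congr 1
          subst hi0
          cases a with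
          | none => simp
          | some i =>
            simp only [Option.map_some, Option.some.injEq, Fin.castSucc_inj]
            by_cases h : i = i0 <;> simp [h]
            exact fun hh => h hh.symm
        rw [Finset.sum_congr rfl fun a _ => this a]
        simp
  have hKnone : ∀ a, K none a = r a := by intro a; simp [hKdef]
  have hKlast : ∀ a, K (some (Fin.last m)) a = r a := by intro a; simp [hKdef]
  have hKcs : ∀ (i : Fin m) (a : Option (Fin m)),
      K (some i.castSucc) a = if a = some i then 1 else 0 := by
    intro i a
    simp only [hKdef]
    rw [if_neg (by simp [(Fin.castSucc_lt_last i).ne])]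
    cases a with
    | none => simp
    | some i' =>
      simp only [Option.map_some, Option.some.injEq, Fin.castSucc_inj]
      by_cases h : i' = i <;> simp [h]
      exact fun hh => h hh.symm
  have hKcol : ∀ a, ∑ a' : Option (Fin (m+1)), mnlProb w' a' * K a' a = mnlProb w a := by
    intro a
    rw [Fintype.sum_option, Fin.sum_univ_castSucc]
    simp only [hKnone, hKlast, hKcs, hp'none, hp'some]
    cases a with
    | none =>
      have hwl : w' (Fin.last m) = wlast := by rw [hw'def]; simp
      simp only [hrdef, Option.elim, hpnone, hwl]
      simp only [reduceCtorEq, if_false, mul_zero, Finset.sum_const_zero]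
      field_simp
      ring
    | some i0 =>
      have : ∀ i : Fin m,
          w' i.castSucc / (1 + S + wlast) * (if (some i0 : Option (Fin m)) = some i then 1 else 0)
            = if i = i0 then w' i.castSucc / (1 + S + wlast) else 0 := by
        intro i
        by_cases h : i = i0
        · subst h; simp
        · rw [if_neg (fun hh => h ((Option.some.inj hh).symm)), mul_zero, if_neg h]
      rw [Finset.sum_congr rfl fun i _ => this i, Finset.sum_ite_eq' Finset.univ i0]
      simp only [Finset.mem_univ, if_true]
      have hwcs : w' i0.castSucc = w i0 := by rw [hw'def]; simp
      have hwl : w' (Fin.last m) = wlast := by rw [hw'def]; simp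
      rw [hwcs, hwl, hpsome]
      simp only [hrdef, Option.elim]
      field_simp
      ring
  have hKsupp : ∀ (f' : Fin T → Option (Fin (m+1))) (g : Fin T → Option (Fin m)),
      (∀ t, K (f' t) (g t) ≠ 0) →
      (Finset.univ.sup (fun i : Fin m => loadCount f' i.castSucc))
        ≤ Finset.univ.sup (loadCount g) := by
    intro f' g hKg
    apply Finset.sup_le
    intro i _
    refine le_trans ?_ (Finset.le_sup (Finset.mem_univ i))
    apply Finset.card_le_card
    intro t ht
    simp only [Finset.mem_filter, Finset.mem_univ, true_and] at ht ⊢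
    have hk := hKg t
    rw [ht, hKcs] at hk
    by_contra hne
    exact hk (by simp [hne])
  -- main chain
  have hP'0 : ∀ f' : Fin T → Option (Fin (m+1)), 0 ≤ ∏ t, mnlProb w' (f' t) :=
    fun f' => Finset.prod_nonneg fun t _ => hp'0 _
  have hone : ∀ f' : Fin T → Option (Fin (m+1)),
      ∑ g : Fin T → Option (Fin m), ∏ t, K (f' t) (g t) = 1 := by
    intro f'
    rw [← Fintype.piFinset_univ, ← Finset.prod_univ_sum]
    rw [Finset.prod_congr rfl fun t _ => hKrow (f' t)]
    simp
  have hcol : ∀ g : Fin T → Option (Fin m),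
      ∑ f' : Fin T → Option (Fin (m+1)),
        (∏ t, mnlProb w' (f' t)) * ∏ t, K (f' t) (g t) = ∏ t, mnlProb w (g t) := by
    intro g
    rw [Finset.sum_congr rfl fun f' _ => (Finset.prod_mul_distrib).symm]
    rw [← Fintype.piFinset_univ,
      ← Finset.prod_univ_sum (fun _ => (Finset.univ : Finset (Option (Fin (m+1)))))
        (fun t a => mnlProb w' a * K a (g t))]
    exact Finset.prod_congr rfl fun t _ => hKcol (g t)
  calc
    ∑ f' : Fin T → Option (Fin (m+1)),
        (∏ t, mnlProb w' (f' t)) *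
          ((Finset.univ.sup (fun i : Fin m => loadCount f' i.castSucc) : ℕ) : ℝ)
      = ∑ f' : Fin T → Option (Fin (m+1)),
          ∑ g : Fin T → Option (Fin m),
            (∏ t, mnlProb w' (f' t)) *
              ((Finset.univ.sup (fun i : Fin m => loadCount f' i.castSucc) : ℕ) : ℝ) *
              ∏ t, K (f' t) (g t) := by
        refine Finset.sum_congr rfl fun f' _ => ?_
        rw [← Finset.mul_sum, hone f', mul_one]
    _ ≤ ∑ f' : Fin T → Option (Fin (m+1)),
          ∑ g : Fin T → Option (Fin m),
            (∏ t, mnlProb w' (f' t)) *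
              ((Finset.univ.sup (loadCount g) : ℕ) : ℝ) *
              ∏ t, K (f' t) (g t) := by
        refine Finset.sum_le_sum fun f' _ => Finset.sum_le_sum fun g _ => ?_
        by_cases hz : (∏ t, K (f' t) (g t)) = 0
        · rw [hz, mul_zero, mul_zero]
        · have hall : ∀ t, K (f' t) (g t) ≠ 0 := by
            intro t ht
            exact hz (Finset.prod_eq_zero (Finset.mem_univ t) ht)
          have hmono := hKsupp f' g hall
          have hKnn : (0:ℝ) ≤ ∏ t, K (f' t) (g t) :=
            Finset.prod_nonneg fun t _ => hK0 _ _
          apply mul_le_mul_of_nonneg_right _ hKnn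
          apply mul_le_mul_of_nonneg_left _ (hP'0 f')
          exact_mod_cast hmono
    _ = ∑ g : Fin T → Option (Fin m),
          ((Finset.univ.sup (loadCount g) : ℕ) : ℝ) *
            ∑ f' : Fin T → Option (Fin (m+1)),
              (∏ t, mnlProb w' (f' t)) * ∏ t, K (f' t) (g t) := by
        rw [Finset.sum_comm]
        refine Finset.sum_congr rfl fun g _ => ?_
        rw [Finset.mul_sum]
        exact Finset.sum_congr rfl fun f' _ => by ring
    _ = ET T m w := by
        rw [ET]
        refine Finset.sum_congr rfl fun g _ => ?_
        rw [hcol g, mul_comm]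

/-- Removing a product whose weight is at most every other weight loses at most a
factor `m/(m+1)` of the expected maximum load. -/
theorem drop_lightest_product_loss
    (T m : ℕ) (hm : 1 ≤ m) (w : Fin m → ℝ) (hw : ∀ i, 0 < w i)
    (wlast : ℝ) (h0 : 0 ≤ wlast) (hle : ∀ i, wlast ≤ w i) :
    ET T m w ≥ ((m : ℝ) / ((m : ℝ) + 1)) * ET T (m + 1) (Fin.snoc w wlast) := by
  have hw0 : ∀ j : Fin (m+1), 0 ≤ (Fin.snoc w wlast : Fin (m+1) → ℝ) j := by
    intro j
    refine Fin.lastCases ?_ ?_ j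
    · simpa using h0
    · intro i; simpa using (hw i).le
  have hle' : ∀ j : Fin (m+1), (Fin.snoc w wlast : Fin (m+1) → ℝ) (Fin.last m) ≤ (Fin.snoc w wlast : Fin (m+1) → ℝ) j := by
    intro j
    refine Fin.lastCases le_rfl ?_ j
    · intro i; simpa using hle i
  exact (stepA T m (Fin.snoc w wlast) hw0 hle').trans (stepB T m w hw wlast h0)
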